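/- Let v1 and v2 be mutually redundant views for y, i.e., I(y; v1 | v2) = 0 and I(y; v2 | v1) = 0. Let z1 satisfy I(y; z1 | v1, v2) = 0 and be sufficient for v2, i.e., I(v1; v2 | z1) = 0. Then I(y; z1) = I(y; (v1, v2)). -/

import Mathlib

open scoped BigOperators
section aux
variable {Ω : Type} [Fintype Ω] (p : Ω → ℝ)

noncomputable def mm {A : Type} [DecidableEq A] (X : Ω → A) (a : A) : ℝ :=
  ∑ ω : Ω, if X ω = a then p ω else 0

lemma mm_nonneg (hp : ∀ ω, 0 ≤ p ω) {A : Type} [DecidableEq A] (X : Ω → A) (a : A) :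
    0 ≤ mm p X a :=
  Finset.sum_nonneg fun ω _ => by split_ifs; exacts [hp ω, le_refl 0]

lemma mm_congr {A A' : Type} [DecidableEq A] [DecidableEq A'] {X : Ω → A} {X' : Ω → A'}
    {a : A} {a' : A'} (h : ∀ ω, X ω = a ↔ X' ω = a') : mm p X a = mm p X' a' :=
  Finset.sum_congr rfl fun ω _ => if_congr (h ω) rfl rfl

lemma mm_mono (hp : ∀ ω, 0 ≤ p ω) {A A' : Type} [DecidableEq A] [DecidableEq A']
    {X : Ω → A} {X' : Ω → A'} {a : A} {a' : A'} (h : ∀ ω, X ω = a → X' ω = a') :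
    mm p X a ≤ mm p X' a' := by
  apply Finset.sum_le_sum; intro ω _
  split_ifs with h1 h2
  · exact le_refl _
  · exact absurd (h ω h1) h2
  · exact hp ω
  · exact le_refl _

lemma mm_eq_zero {A : Type} [DecidableEq A] {X : Ω → A} {a : A} (h : ∀ ω, X ω ≠ a) :
    mm p X a = 0 :=
  Finset.sum_eq_zero fun ω _ => if_neg (h ω)

lemma mm_marg {A B : Type} [Fintype A] [DecidableEq A] [DecidableEq B]
    (X : Ω → A) (Y : Ω → B) (b : B) :
    ∑ a : A, mm p (fun ω => (X ω, Y ω)) (a, b) = mm p Y b := by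
  unfold mm
  rw [Finset.sum_comm]
  refine Finset.sum_congr rfl fun ω _ => ?_
  simp [Prod.mk.injEq, ite_and, Finset.sum_ite_eq]

end aux

/-- Conditional mutual information I(X;Y|Z) for a finite probability space
given by a pmf `p` on `Ω`. -/
noncomputable def condMI {Ω A B C : Type} [Fintype Ω] [Fintype A] [Fintype B] [Fintype C]
    [DecidableEq A] [DecidableEq B] [DecidableEq C]
    (p : Ω → ℝ) (X : Ω → A) (Y : Ω → B) (Z : Ω → C) : ℝ :=
  ∑ a : A, ∑ b : B, ∑ c : C,
    (∑ ω : Ω, if X ω = a ∧ Y ω = b ∧ Z ω = c then p ω else 0) *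
      Real.log
        ((∑ ω : Ω, if X ω = a ∧ Y ω = b ∧ Z ω = c then p ω else 0) *
            (∑ ω : Ω, if Z ω = c then p ω else 0) /
          ((∑ ω : Ω, if X ω = a ∧ Z ω = c then p ω else 0) *
            (∑ ω : Ω, if Y ω = b ∧ Z ω = c then p ω else 0)))

section aux2
variable {Ω A B C : Type} [Fintype Ω] [Fintype A] [Fintype B] [Fintype C]
    [DecidableEq A] [DecidableEq B] [DecidableEq C]
    (p : Ω → ℝ) (X : Ω → A) (Y : Ω → B) (Z : Ω → C)

lemma condMI_eq :
    condMI p X Y Z = ∑ a : A, ∑ b : B, ∑ c : C,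
      mm p (fun ω => (X ω, Y ω, Z ω)) (a, b, c) *
        Real.log (mm p (fun ω => (X ω, Y ω, Z ω)) (a, b, c) * mm p Z c /
          (mm p (fun ω => (X ω, Z ω)) (a, c) * mm p (fun ω => (Y ω, Z ω)) (b, c))) := by
  unfold condMI mm
  simp [Prod.mk.injEq]

/-- reindex a sum along an injection, given vanishing off the range -/
lemma sum_reindex_inj {C C' : Type} [Fintype C] [Fintype C'] [DecidableEq C'] (e : C → C')
    (he : Function.Injective e) (g : C' → ℝ) (hg : ∀ c', c' ∉ Set.range e → g c' = 0) :
    ∑ c' : C', g c' = ∑ c : C, g (e c) := by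
  rw [← Finset.sum_image (g := e) (f := g) (fun x _ y _ h => he h)]
  symm
  apply Finset.sum_subset (Finset.subset_univ _)
  intro c' _ hc'
  apply hg
  intro ⟨c, hc⟩
  exact hc' (Finset.mem_image.2 ⟨c, Finset.mem_univ c, hc⟩)

lemma condMI_symm : condMI p X Y Z = condMI p Y X Z := by
  rw [condMI_eq, condMI_eq, Finset.sum_comm]
  refine Finset.sum_congr rfl fun b _ => Finset.sum_congr rfl fun a _ =>
    Finset.sum_congr rfl fun c _ => ?_
  rw [mm_congr p (X' := fun ω => (Y ω, X ω, Z ω)) (a' := (b, a, c)) (by intro ω; simp; tauto),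
    mul_comm (mm p (fun ω => (X ω, Z ω)) (a, c))]

lemma condMI_relabel_right {C' : Type} [Fintype C'] [DecidableEq C'] (e : C → C')
    (he : Function.Injective e) :
    condMI p X Y (fun ω => e (Z ω)) = condMI p X Y Z := by
  rw [condMI_eq, condMI_eq]
  refine Finset.sum_congr rfl fun a _ => Finset.sum_congr rfl fun b _ => ?_
  rw [sum_reindex_inj e he]
  · refine Finset.sum_congr rfl fun c _ => ?_
    rw [mm_congr p (X' := fun ω => (X ω, Y ω, Z ω)) (a' := (a, b, c)) (by intro ω; simp [he.eq_iff]),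
      mm_congr p (X := fun ω => e (Z ω)) (X' := Z) (a := e c) (a' := c) (by intro ω; simp [he.eq_iff]),
      mm_congr p (X := fun ω => (X ω, e (Z ω))) (X' := fun ω => (X ω, Z ω)) (a' := (a, c)) (by intro ω; simp [he.eq_iff]),
      mm_congr p (X := fun ω => (Y ω, e (Z ω))) (X' := fun ω => (Y ω, Z ω)) (a' := (b, c)) (by intro ω; simp [he.eq_iff])]
  · intro c' hc'
    rw [mm_eq_zero p (fun ω h => hc' ⟨Z ω, by simpa using congrArg Prod.snd (congrArg Prod.snd h)⟩)]
    ring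

lemma condMI_relabel_mid {B' : Type} [Fintype B'] [DecidableEq B'] (e : B → B')
    (he : Function.Injective e) :
    condMI p X (fun ω => e (Y ω)) Z = condMI p X Y Z := by
  rw [condMI_eq, condMI_eq]
  refine Finset.sum_congr rfl fun a _ => ?_
  rw [sum_reindex_inj e he]
  · refine Finset.sum_congr rfl fun b _ => Finset.sum_congr rfl fun c _ => ?_
    rw [mm_congr p (X' := fun ω => (X ω, Y ω, Z ω)) (a' := (a, b, c)) (by intro ω; simp [he.eq_iff]),
      mm_congr p (X := fun ω => (e (Y ω), Z ω)) (X' := fun ω => (Y ω, Z ω)) (a' := (b, c)) (by intro ω; simp [he.eq_iff])]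
  · intro b' hb'
    apply Finset.sum_eq_zero
    intro c _
    rw [mm_eq_zero p (fun ω h => hb' ⟨Y ω, by simpa using congrArg Prod.fst (congrArg Prod.snd h)⟩)]
    ring

end aux2

lemma term_lb {j zc xz yz : ℝ} (hj : 0 ≤ j) (hzc : 0 ≤ zc) (hxz : 0 ≤ xz) (hyz : 0 ≤ yz)
    (hjx : j ≤ xz) (hxzc : xz ≤ zc) (hjy : j ≤ yz) :
    j - xz * yz / zc ≤ j * Real.log (j * zc / (xz * yz)) := by
  rcases eq_or_lt_of_le hj with h0 | hj0
  · rw [← h0]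
    have : 0 ≤ xz * yz / zc := by positivity
    simp
    linarith
  · have hxz0 : 0 < xz := lt_of_lt_of_le hj0 hjx
    have hyz0 : 0 < yz := lt_of_lt_of_le hj0 hjy
    have hzc0 : 0 < zc := lt_of_lt_of_le hxz0 hxzc
    have hr : 0 < xz * yz / (j * zc) := by positivity
    have hlog := Real.log_le_sub_one_of_pos hr
    have harg : j * zc / (xz * yz) = (xz * yz / (j * zc))⁻¹ := by
      field_simp
    rw [harg, Real.log_inv]
    have hjr : j * (xz * yz / (j * zc)) = xz * yz / zc := by
      field_simp
    nlinarith [mul_le_mul_of_nonneg_left hlog hj]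

section aux3
variable {Ω A B C : Type} [Fintype Ω] [Fintype A] [Fintype B] [Fintype C]
    [DecidableEq A] [DecidableEq B] [DecidableEq C]
    (p : Ω → ℝ) (X : Ω → A) (Y : Ω → B) (Z : Ω → C)

lemma condMI_nonneg (hp : ∀ ω, 0 ≤ p ω) : 0 ≤ condMI p X Y Z := by
  rw [condMI_eq]
  have hre : ∀ f : A → B → C → ℝ, ∑ a : A, ∑ b : B, ∑ c : C, f a b c
      = ∑ c : C, ∑ a : A, ∑ b : B, f a b c := by
    intro f
    calc ∑ a : A, ∑ b : B, ∑ c : C, f a b c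
        = ∑ a : A, ∑ c : C, ∑ b : B, f a b c :=
          Finset.sum_congr rfl fun a _ => Finset.sum_comm
      _ = ∑ c : C, ∑ a : A, ∑ b : B, f a b c := Finset.sum_comm
  rw [hre]
  apply Finset.sum_nonneg
  intro c _
  set zc := mm p Z c with hzc
  have key : ∑ a : A, ∑ b : B,
      (mm p (fun ω => (X ω, Y ω, Z ω)) (a, b, c) - mm p (fun ω => (X ω, Z ω)) (a, c) *
        mm p (fun ω => (Y ω, Z ω)) (b, c) / zc)
      ≤ ∑ a : A, ∑ b : B, mm p (fun ω => (X ω, Y ω, Z ω)) (a, b, c) *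
        Real.log (mm p (fun ω => (X ω, Y ω, Z ω)) (a, b, c) * zc /
          (mm p (fun ω => (X ω, Z ω)) (a, c) * mm p (fun ω => (Y ω, Z ω)) (b, c))) := by
    refine Finset.sum_le_sum fun a _ => Finset.sum_le_sum fun b _ => ?_
    refine term_lb (mm_nonneg p hp _ _) (mm_nonneg p hp _ _) (mm_nonneg p hp _ _)
      (mm_nonneg p hp _ _) ?_ ?_ ?_
    · exact mm_mono p hp (by intro ω h; simpa using ⟨congrArg Prod.fst h,
        congrArg Prod.snd (congrArg Prod.snd h)⟩)
    · exact mm_mono p hp (by intro ω h; exact congrArg Prod.snd h)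
    · exact mm_mono p hp (by intro ω h; simpa using ⟨congrArg Prod.fst (congrArg Prod.snd h),
        congrArg Prod.snd (congrArg Prod.snd h)⟩)
  refine le_trans (le_of_eq ?_) key
  have h1 : ∑ a : A, ∑ b : B, mm p (fun ω => (X ω, Y ω, Z ω)) (a, b, c) = zc := by
    rw [Finset.sum_comm]
    have : ∀ b : B, ∑ a : A, mm p (fun ω => (X ω, Y ω, Z ω)) (a, b, c)
        = mm p (fun ω => (Y ω, Z ω)) (b, c) :=
      fun b => mm_marg p X (fun ω => (Y ω, Z ω)) (b, c)
    rw [Finset.sum_congr rfl fun b _ => this b]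
    exact mm_marg p Y Z c
  have h2 : ∑ a : A, ∑ b : B, (mm p (fun ω => (X ω, Z ω)) (a, c) *
      mm p (fun ω => (Y ω, Z ω)) (b, c) / zc)
      = (∑ a : A, mm p (fun ω => (X ω, Z ω)) (a, c)) *
        (∑ b : B, mm p (fun ω => (Y ω, Z ω)) (b, c)) / zc := by
    simp only [Finset.sum_mul, Finset.mul_sum, Finset.sum_div]
    exact Finset.sum_comm
  symm
  simp only [Finset.sum_sub_distrib]
  rw [h1, h2, mm_marg p X Z c, mm_marg p Y Z c]
  rcases eq_or_ne zc 0 with h | h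
  · rw [h]; simp
  · field_simp
    rw [hzc]; ring
end aux3

lemma log_split {j w xw yzw xzw zw : ℝ} (hj : 0 < j) (hw : 0 < w) (hxw : 0 < xw)
    (hyzw : 0 < yzw) (hxzw : 0 < xzw) (hzw : 0 < zw) :
    j * Real.log (j * w / (xw * yzw))
      = j * Real.log (xzw * w / (xw * zw)) + j * Real.log (j * zw / (xzw * yzw)) := by
  have h : j * w / (xw * yzw) = (xzw * w / (xw * zw)) * (j * zw / (xzw * yzw)) := by
    field_simp
  rw [h, Real.log_mul (by positivity) (by positivity), mul_add]

section chain
variable {Ω A B C D : Type} [Fintype Ω] [Fintype A] [Fintype B] [Fintype C] [Fintype D]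
    [DecidableEq A] [DecidableEq B] [DecidableEq C] [DecidableEq D]
    (p : Ω → ℝ) (X : Ω → A) (Y : Ω → B) (Z : Ω → C) (W : Ω → D)

lemma condMI_chain (hp : ∀ ω, 0 ≤ p ω) :
    condMI p X (fun ω => (Y ω, Z ω)) W
      = condMI p X Z W + condMI p X Y (fun ω => (Z ω, W ω)) := by
  rw [condMI_eq, condMI_eq, condMI_eq]
  have hre3 : ∀ f : C → D → B → ℝ, ∑ c : C, ∑ d : D, ∑ b : B, f c d b
      = ∑ b : B, ∑ c : C, ∑ d : D, f c d b := by
    intro f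
    calc ∑ c : C, ∑ d : D, ∑ b : B, f c d b
        = ∑ c : C, ∑ b : B, ∑ d : D, f c d b :=
          Finset.sum_congr rfl fun c _ => Finset.sum_comm
      _ = ∑ b : B, ∑ c : C, ∑ d : D, f c d b := Finset.sum_comm
  have hL : (∑ a : A, ∑ bc : B × C, ∑ d : D,
      mm p (fun ω => (X ω, (Y ω, Z ω), W ω)) (a, bc, d) *
        Real.log (mm p (fun ω => (X ω, (Y ω, Z ω), W ω)) (a, bc, d) * mm p W d /
          (mm p (fun ω => (X ω, W ω)) (a, d) * mm p (fun ω => ((Y ω, Z ω), W ω)) (bc, d))))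
      = ∑ a : A, ∑ b : B, ∑ c : C, ∑ d : D,
        mm p (fun ω => (X ω, Y ω, Z ω, W ω)) (a, b, c, d) *
          Real.log (mm p (fun ω => (X ω, Y ω, Z ω, W ω)) (a, b, c, d) * mm p W d /
            (mm p (fun ω => (X ω, W ω)) (a, d) *
              mm p (fun ω => (Y ω, Z ω, W ω)) (b, c, d))) := by
    refine Finset.sum_congr rfl fun a _ => ?_
    rw [Fintype.sum_prod_type]
    refine Finset.sum_congr rfl fun b _ => Finset.sum_congr rfl fun c _ =>
      Finset.sum_congr rfl fun d _ => ?_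
    rw [mm_congr p (X := fun ω => (X ω, (Y ω, Z ω), W ω)) (a := (a, (b, c), d))
        (X' := fun ω => (X ω, Y ω, Z ω, W ω)) (a' := (a, b, c, d))
        (by intro ω; simp only [Prod.mk.injEq]; tauto),
      mm_congr p (X := fun ω => ((Y ω, Z ω), W ω)) (a := ((b, c), d))
        (X' := fun ω => (Y ω, Z ω, W ω)) (a' := (b, c, d))
        (by intro ω; simp only [Prod.mk.injEq]; tauto)]
  have hR1 : (∑ a : A, ∑ c : C, ∑ d : D,
      mm p (fun ω => (X ω, Z ω, W ω)) (a, c, d) *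
        Real.log (mm p (fun ω => (X ω, Z ω, W ω)) (a, c, d) * mm p W d /
          (mm p (fun ω => (X ω, W ω)) (a, d) * mm p (fun ω => (Z ω, W ω)) (c, d))))
      = ∑ a : A, ∑ b : B, ∑ c : C, ∑ d : D,
        mm p (fun ω => (X ω, Y ω, Z ω, W ω)) (a, b, c, d) *
          Real.log (mm p (fun ω => (X ω, Z ω, W ω)) (a, c, d) * mm p W d /
            (mm p (fun ω => (X ω, W ω)) (a, d) * mm p (fun ω => (Z ω, W ω)) (c, d))) := by
    refine Finset.sum_congr rfl fun a _ => ?_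
    rw [← hre3]
    refine Finset.sum_congr rfl fun c _ => Finset.sum_congr rfl fun d _ => ?_
    have hXZW : mm p (fun ω => (X ω, Z ω, W ω)) (a, c, d)
        = ∑ b : B, mm p (fun ω => (X ω, Y ω, Z ω, W ω)) (a, b, c, d) := by
      rw [← mm_marg p Y (fun ω => (X ω, Z ω, W ω)) (a, c, d)]
      refine Finset.sum_congr rfl fun b _ => ?_
      exact mm_congr p (by intro ω; simp only [Prod.mk.injEq]; tauto)
    rw [hXZW, Finset.sum_mul]
  have hR2 : (∑ a : A, ∑ b : B, ∑ cd : C × D,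
      mm p (fun ω => (X ω, Y ω, (Z ω, W ω))) (a, b, cd) *
        Real.log (mm p (fun ω => (X ω, Y ω, (Z ω, W ω))) (a, b, cd) *
            mm p (fun ω => (Z ω, W ω)) cd /
          (mm p (fun ω => (X ω, (Z ω, W ω))) (a, cd) *
            mm p (fun ω => (Y ω, (Z ω, W ω))) (b, cd))))
      = ∑ a : A, ∑ b : B, ∑ c : C, ∑ d : D,
        mm p (fun ω => (X ω, Y ω, Z ω, W ω)) (a, b, c, d) *
          Real.log (mm p (fun ω => (X ω, Y ω, Z ω, W ω)) (a, b, c, d) *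
              mm p (fun ω => (Z ω, W ω)) (c, d) /
            (mm p (fun ω => (X ω, Z ω, W ω)) (a, c, d) *
              mm p (fun ω => (Y ω, Z ω, W ω)) (b, c, d))) := by
    refine Finset.sum_congr rfl fun a _ => Finset.sum_congr rfl fun b _ => ?_
    rw [Fintype.sum_prod_type]
  rw [hL, hR1, hR2, ← Finset.sum_add_distrib]
  refine Finset.sum_congr rfl fun a _ => ?_
  rw [← Finset.sum_add_distrib]
  refine Finset.sum_congr rfl fun b _ => ?_
  rw [← Finset.sum_add_distrib]
  refine Finset.sum_congr rfl fun c _ => ?_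
  rw [← Finset.sum_add_distrib]
  refine Finset.sum_congr rfl fun d _ => ?_
  rcases eq_or_lt_of_le (mm_nonneg p hp (fun ω => (X ω, Y ω, Z ω, W ω)) (a, b, c, d))
    with h0 | hpos
  · rw [← h0]; ring
  · have hXW : 0 < mm p (fun ω => (X ω, W ω)) (a, d) :=
      lt_of_lt_of_le hpos (mm_mono p hp (by intro ω h; simp only [Prod.mk.injEq] at h ⊢; tauto))
    have hYZW : 0 < mm p (fun ω => (Y ω, Z ω, W ω)) (b, c, d) :=
      lt_of_lt_of_le hpos (mm_mono p hp (by intro ω h; simp only [Prod.mk.injEq] at h ⊢; tauto))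
    have hXZW : 0 < mm p (fun ω => (X ω, Z ω, W ω)) (a, c, d) :=
      lt_of_lt_of_le hpos (mm_mono p hp (by intro ω h; simp only [Prod.mk.injEq] at h ⊢; tauto))
    have hZW : 0 < mm p (fun ω => (Z ω, W ω)) (c, d) :=
      lt_of_lt_of_le hpos (mm_mono p hp (by intro ω h; simp only [Prod.mk.injEq] at h ⊢; tauto))
    have hW : 0 < mm p W d :=
      lt_of_lt_of_le hpos (mm_mono p hp (by intro ω h; simp only [Prod.mk.injEq] at h ⊢; tauto))
    exact log_split hpos hW hXW hYZW hXZW hZW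

end chain

/-- Mutual information I(X;Y) as conditional mutual information given a constant. -/
noncomputable def mi {Ω A B : Type} [Fintype Ω] [Fintype A] [Fintype B]
    [DecidableEq A] [DecidableEq B] (p : Ω → ℝ) (X : Ω → A) (Y : Ω → B) : ℝ :=
  condMI p X Y (fun _ => ())

section assem
variable {Ω A B B' C C' : Type} [Fintype Ω] [Fintype A] [Fintype B] [Fintype B']
    [Fintype C] [Fintype C'] [DecidableEq A] [DecidableEq B] [DecidableEq B']
    [DecidableEq C] [DecidableEq C'] (p : Ω → ℝ)

lemma condMI_swap_mid (X : Ω → A) (Y : Ω → B) (Y' : Ω → B') (Z : Ω → C) :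
    condMI p X (fun ω => (Y ω, Y' ω)) Z = condMI p X (fun ω => (Y' ω, Y ω)) Z :=
  condMI_relabel_mid p X (fun ω => (Y' ω, Y ω)) Z Prod.swap Prod.swap_injective

lemma condMI_swap_right (X : Ω → A) (Y : Ω → B) (Z : Ω → C) (Z' : Ω → C') :
    condMI p X Y (fun ω => (Z ω, Z' ω)) = condMI p X Y (fun ω => (Z' ω, Z ω)) :=
  condMI_relabel_right p X Y (fun ω => (Z' ω, Z ω)) Prod.swap Prod.swap_injective

lemma condMI_unit_right (X : Ω → A) (Y : Ω → B) (Z : Ω → C) :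
    condMI p X Y (fun ω => (Z ω, ())) = condMI p X Y Z :=
  condMI_relabel_right p X Y Z (fun c => (c, ())) (fun _ _ h => congrArg Prod.fst h)

lemma mi_chain (hp : ∀ ω, 0 ≤ p ω) (X : Ω → A) (Y : Ω → B) (Z : Ω → C) :
    mi p X (fun ω => (Y ω, Z ω)) = mi p X Z + condMI p X Y Z := by
  show condMI p X (fun ω => (Y ω, Z ω)) (fun _ => ())
    = condMI p X Z (fun _ => ()) + condMI p X Y Z
  rw [condMI_chain p X Y Z (fun _ => ()) hp, condMI_unit_right]

end assem

theorem stmt3 {Ω A B C D : Type} [Fintype Ω] [Fintype A] [Fintype B] [Fintype C] [Fintype D]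
    [DecidableEq A] [DecidableEq B] [DecidableEq C] [DecidableEq D]
    (p : Ω → ℝ) (hp : ∀ ω, 0 ≤ p ω) (hp1 : ∑ ω : Ω, p ω = 1)
    (v1 : Ω → A) (v2 : Ω → B) (y : Ω → C) (z1 : Ω → D)
    (hred1 : condMI p y v1 v2 = 0)
    (hred2 : condMI p y v2 v1 = 0)
    (hrep : condMI p y z1 (fun ω => (v1 ω, v2 ω)) = 0)
    (hsuff : condMI p v1 v2 z1 = 0) :
    mi p y z1 = mi p y (fun ω => (v1 ω, v2 ω)) := by
  -- Step 1: I(y; v1 | (z1,v2)) = 0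
  have c1 : condMI p y (fun ω => (z1 ω, v1 ω)) v2 = 0 := by
    rw [condMI_chain p y z1 v1 v2 hp, hred1, hrep]; ring
  have c1' : condMI p y (fun ω => (v1 ω, z1 ω)) v2 = 0 := by
    rw [condMI_swap_mid]; exact c1
  have e1 : condMI p y (fun ω => (v1 ω, z1 ω)) v2
      = condMI p y z1 v2 + condMI p y v1 (fun ω => (z1 ω, v2 ω)) :=
    condMI_chain p y v1 z1 v2 hp
  have h1 : condMI p y v1 (fun ω => (z1 ω, v2 ω)) = 0 := by
    have n1 := condMI_nonneg p y z1 v2 hp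
    have n2 := condMI_nonneg p y v1 (fun ω => (z1 ω, v2 ω)) hp
    rw [c1'] at e1; linarith
  -- Step 2: I(v1; y | z1) = 0
  have c2 : condMI p y v1 (fun ω => (v2 ω, z1 ω)) = 0 := by
    rw [condMI_swap_right]; exact h1
  have c2' : condMI p v1 y (fun ω => (v2 ω, z1 ω)) = 0 := by
    rw [condMI_symm]; exact c2
  have c2'' : condMI p v1 (fun ω => (y ω, v2 ω)) z1 = 0 := by
    rw [condMI_chain p v1 y v2 z1 hp, hsuff, c2']; ring
  have c2''' : condMI p v1 (fun ω => (v2 ω, y ω)) z1 = 0 := by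
    rw [condMI_swap_mid]; exact c2''
  have e2 : condMI p v1 (fun ω => (v2 ω, y ω)) z1
      = condMI p v1 y z1 + condMI p v1 v2 (fun ω => (y ω, z1 ω)) :=
    condMI_chain p v1 v2 y z1 hp
  have h2 : condMI p v1 y z1 = 0 := by
    have n1 := condMI_nonneg p v1 y z1 hp
    have n2 := condMI_nonneg p v1 v2 (fun ω => (y ω, z1 ω)) hp
    rw [c2'''] at e2; linarith
  -- Step 3: I(y; v2 | (z1,v1)) = 0
  have hrep' : condMI p y z1 (fun ω => (v2 ω, v1 ω)) = 0 := by
    rw [condMI_swap_right]; exact hrep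
  have c3 : condMI p y (fun ω => (z1 ω, v2 ω)) v1 = 0 := by
    rw [condMI_chain p y z1 v2 v1 hp, hred2, hrep']; ring
  have c3' : condMI p y (fun ω => (v2 ω, z1 ω)) v1 = 0 := by
    rw [condMI_swap_mid]; exact c3
  have e3 : condMI p y (fun ω => (v2 ω, z1 ω)) v1
      = condMI p y z1 v1 + condMI p y v2 (fun ω => (z1 ω, v1 ω)) :=
    condMI_chain p y v2 z1 v1 hp
  have h3 : condMI p y v2 (fun ω => (z1 ω, v1 ω)) = 0 := by
    have n1 := condMI_nonneg p y z1 v1 hp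
    have n2 := condMI_nonneg p y v2 (fun ω => (z1 ω, v1 ω)) hp
    rw [c3'] at e3; linarith
  -- Step 4: I(y; (v1,v2) | z1) = 0
  have h2' : condMI p y v1 z1 = 0 := by rw [condMI_symm]; exact h2
  have h3' : condMI p y v2 (fun ω => (v1 ω, z1 ω)) = 0 := by
    rw [condMI_swap_right]; exact h3
  have c4 : condMI p y (fun ω => (v2 ω, v1 ω)) z1 = 0 := by
    rw [condMI_chain p y v2 v1 z1 hp, h2', h3']; ring
  have h4 : condMI p y (fun ω => (v1 ω, v2 ω)) z1 = 0 := by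
    rw [condMI_swap_mid]; exact c4
  -- Step 5: combine via unconditional chain rule
  have ea : mi p y (fun ω => (z1 ω, (v1 ω, v2 ω)))
      = mi p y (fun ω => (v1 ω, v2 ω)) + condMI p y z1 (fun ω => (v1 ω, v2 ω)) :=
    mi_chain p hp y z1 (fun ω => (v1 ω, v2 ω))
  have eb : mi p y (fun ω => ((v1 ω, v2 ω), z1 ω))
      = mi p y z1 + condMI p y (fun ω => (v1 ω, v2 ω)) z1 :=
    mi_chain p hp y (fun ω => (v1 ω, v2 ω)) z1
  have eswap : mi p y (fun ω => (z1 ω, (v1 ω, v2 ω)))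
      = mi p y (fun ω => ((v1 ω, v2 ω), z1 ω)) :=
    condMI_swap_mid p y z1 (fun ω => (v1 ω, v2 ω)) (fun _ => ())
  rw [hrep] at ea
  rw [h4] at eb
  linarith
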